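/- Let ⟨T_s⟩_{s ∈ 2^{<ω}} be a full splitting system over a perfect-tree forcing notion P. Then for every s ∈ 2^{<ω}, T̄(s) is a perfect tree, and [T̄(s)] = ⋂_{n ≥ |s|} ⋃ {[T_t] : t ∈ 2ⁿ, s ⊑ t}. -/
import Mathlib


/-- A tree: a set of finite binary strings closed under initial segments. -/
def IsTree (T : Set (List Bool)) : Prop :=
  ∀ s t : List Bool, s <+: t → t ∈ T → s ∈ T

/-- A perfect tree: a nonempty tree in which every node has a splitting extension. -/
def IsPerfectTree (T : Set (List Bool)) : Prop :=
  T.Nonempty ∧ IsTree T ∧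
    ∀ s ∈ T, ∃ t ∈ T, s <+: t ∧ t ++ [false] ∈ T ∧ t ++ [true] ∈ T

/-- T↾u = {t ∈ T : u ⊑ t or t ⊑ u}. -/
def restr (T : Set (List Bool)) (u : List Bool) : Set (List Bool) :=
  {t | t ∈ T ∧ (u <+: t ∨ t <+: u)}

/-- [T]: the set of paths through T, as a subset of Cantor space 2^ω = ℕ → Bool. -/
def paths (T : Set (List Bool)) : Set (ℕ → Bool) :=
  {a | ∀ n : ℕ, (List.ofFn fun i : Fin n => a i) ∈ T}

/-- s is the stem (root) of T: the ⊑-largest string s ∈ T with T = T↾s. -/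
def IsStem (T : Set (List Bool)) (s : List Bool) : Prop :=
  s ∈ T ∧ T = restr T s ∧ ∀ t ∈ T, T = restr T t → t <+: s

/-- The stem of a tree (well-defined and equal to the root for perfect trees). -/
noncomputable def stem (T : Set (List Bool)) : List Bool :=
  haveI := Classical.dec (∃ s, IsStem T s)
  if h : ∃ s, IsStem T s then h.choose else []

/-- A perfect-tree forcing notion: a set of perfect trees closed under T ↦ T↾u, u ∈ T. -/
def IsPTF (P : Set (Set (List Bool))) : Prop :=
  (∀ T ∈ P, IsPerfectTree T) ∧ ∀ T ∈ P, ∀ u ∈ T, restr T u ∈ P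

/-- A finite splitting system over P of height n, given as ⟨φ s⟩ for strings of length < n. -/
def FinSplitSys (P : Set (Set (List Bool))) (n : ℕ)
    (φ : List Bool → Set (List Bool)) : Prop :=
  (∀ s : List Bool, s.length < n → φ s ∈ P) ∧
  ∀ (s : List Bool) (i : Bool), s.length + 1 < n →
    φ (s ++ [i]) ⊆ φ s ∧ stem (φ s) ++ [i] <+: stem (φ (s ++ [i]))

/-- A full splitting system over P, indexed by all of 2^{<ω}. -/
def FullSplitSys (P : Set (Set (List Bool)))
    (φ : List Bool → Set (List Bool)) : Prop :=
  (∀ s : List Bool, φ s ∈ P) ∧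
  ∀ (s : List Bool) (i : Bool),
    φ (s ++ [i]) ⊆ φ s ∧ stem (φ s) ++ [i] <+: stem (φ (s ++ [i]))

/-- T̄(s) = ⋂_{n ≥ |s|} ⋃ {φ t : t ∈ 2ⁿ, s ⊑ t}. -/
def Tbar (φ : List Bool → Set (List Bool)) (s : List Bool) : Set (List Bool) :=
  ⋂ n ∈ {n : ℕ | s.length ≤ n},
    ⋃ t ∈ {t : List Bool | t.length = n ∧ s <+: t}, φ t


section Aux

lemma aux_exists_stem {T : Set (List Bool)} (hT : IsPerfectTree T) : ∃ u, IsStem T u := by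
  classical
  obtain ⟨⟨a, ha⟩, htree, hsplit⟩ := hT
  have hnil : [] ∈ T := htree [] a List.nil_prefix ha
  obtain ⟨t₀, ht₀, -, h0, h1⟩ := hsplit [] hnil
  set A : Set (List Bool) := {u | u ∈ T ∧ T = restr T u} with hA
  have hnilA : [] ∈ A := ⟨hnil, by ext t; simp [restr, List.nil_prefix]⟩
  have hbound : ∀ u ∈ A, u.length ≤ t₀.length := by
    rintro u ⟨huT, hres⟩
    by_contra h
    push_neg at h
    have key : ∀ i : Bool, t₀ ++ [i] <+: u := by
      intro i
      have hmem : t₀ ++ [i] ∈ restr T u := by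
        rw [← hres]; cases i
        · exact h0
        · exact h1
      rcases hmem.2 with h' | h'
      · have hl := h'.length_le
        have he : u = t₀ ++ [i] := h'.eq_of_length (by simp at hl ⊢; omega)
        rw [he]
      · exact h'
    have heq : t₀ ++ [false] = t₀ ++ [true] := by
      rcases List.prefix_or_prefix_of_prefix (key false) (key true) with h' | h'
      · exact h'.eq_of_length (by simp)
      · exact (h'.eq_of_length (by simp)).symm
    simp at heq
  set Q : ℕ → Prop := fun n => ∃ u, u ∈ A ∧ u.length = n with hQ
  set N := Nat.findGreatest Q t₀.length with hN
  have hQN : Q N := Nat.findGreatest_spec (Nat.zero_le _) ⟨[], hnilA, rfl⟩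
  obtain ⟨u, huA, hulen⟩ := hQN
  refine ⟨u, huA.1, huA.2, ?_⟩
  intro t htT hrest
  have htA : t ∈ A := ⟨htT, hrest⟩
  have htle : t.length ≤ N := Nat.le_findGreatest (hbound t htA) ⟨t, htA, rfl⟩
  have hcmp : t ∈ restr T u := by rw [← huA.2]; exact htT
  rcases hcmp.2 with h' | h'
  · have hl := h'.length_le
    have he : u = t := h'.eq_of_length (by omega)
    rw [he]
  · exact h'

lemma aux_stem_isStem {T : Set (List Bool)} (hT : IsPerfectTree T) : IsStem T (stem T) := by
  have h : ∃ u, IsStem T u := aux_exists_stem hT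
  unfold stem
  rw [dif_pos h]
  exact h.choose_spec

lemma aux_ofFn_prefix (x : ℕ → Bool) {m m' : ℕ} (h : m ≤ m') :
    (List.ofFn fun i : Fin m => x i) <+: (List.ofFn fun i : Fin m' => x i) := by
  rw [List.prefix_iff_eq_take]
  apply List.ext_getElem <;> simp [h, Nat.min_eq_left, Nat.le_of_lt]

variable {P : Set (Set (List Bool))} {φ : List Bool → Set (List Bool)}

lemma aux_chain (hφ : FullSplitSys P φ) : ∀ (w u : List Bool),
    φ (u ++ w) ⊆ φ u ∧ stem (φ u) <+: stem (φ (u ++ w)) ∧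
      (stem (φ u)).length + w.length ≤ (stem (φ (u ++ w))).length := by
  intro w
  induction w with
  | nil => intro u; simp
  | cons i w ih =>
    intro u
    have h1 := hφ.2 u i
    have h2 := ih (u ++ [i])
    have e : u ++ i :: w = (u ++ [i]) ++ w := by simp
    rw [e]
    refine ⟨h2.1.trans h1.1, ?_, ?_⟩
    · exact ((List.prefix_append _ _).trans h1.2).trans h2.2.1
    · have ha := h1.2.length_le
      have hb := h2.2.2
      simp only [List.length_append, List.length_cons, List.length_singleton] at ha ⊢
      omega

lemma aux_mem_Tbar {s : List Bool} {x : List Bool} :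
    x ∈ Tbar φ s ↔ ∀ n, s.length ≤ n → ∃ t, (t.length = n ∧ s <+: t) ∧ x ∈ φ t := by
  simp [Tbar]

lemma aux_stem_mem_Tbar (hP : IsPTF P) (hφ : FullSplitSys P φ) {s u : List Bool}
    (hsu : s <+: u) : stem (φ u) ∈ Tbar φ s := by
  have hperf : ∀ v, IsPerfectTree (φ v) := fun v => hP.1 _ (hφ.1 v)
  rw [aux_mem_Tbar]
  intro n hn
  by_cases h : n ≤ u.length
  · refine ⟨u.take n, ⟨by simp [h], ?_⟩, ?_⟩
    · rw [List.prefix_take_iff]; exact ⟨hsu, hn⟩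
    · have := aux_chain hφ (u.drop n) (u.take n)
      rw [List.take_append_drop] at this
      exact this.1 (aux_stem_isStem (hperf u)).1
  · push_neg at h
    refine ⟨u ++ List.replicate (n - u.length) false, ⟨by simp; omega,
      hsu.trans (List.prefix_append _ _)⟩, ?_⟩
    have hc := aux_chain hφ (List.replicate (n - u.length) false) u
    exact (hperf _).2.1 _ _ hc.2.1 (aux_stem_isStem (hperf _)).1

end Aux

/-- For a full splitting system ⟨T_s⟩ over P, every T̄(s) is a perfect
tree and [T̄(s)] = ⋂_{n ≥ |s|} ⋃ {[T_t] : t ∈ 2ⁿ, s ⊑ t}. -/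
theorem stmt_12 (P : Set (Set (List Bool))) (hP : IsPTF P)
    (φ : List Bool → Set (List Bool)) (hφ : FullSplitSys P φ) (s : List Bool) :
    IsPerfectTree (Tbar φ s) ∧
    paths (Tbar φ s) =
      ⋂ n ∈ {n : ℕ | s.length ≤ n},
        ⋃ t ∈ {t : List Bool | t.length = n ∧ s <+: t}, paths (φ t) := by
  classical
  have hperf : ∀ v, IsPerfectTree (φ v) := fun v => hP.1 _ (hφ.1 v)
  have htree : ∀ v, IsTree (φ v) := fun v => (hperf v).2.1
  have Ttree : IsTree (Tbar φ s) := by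
    intro a b hab hb
    rw [aux_mem_Tbar] at hb ⊢
    intro n hn
    obtain ⟨t, ht, hbt⟩ := hb n hn
    exact ⟨t, ht, htree t a b hab hbt⟩
  constructor
  · refine ⟨⟨stem (φ s), aux_stem_mem_Tbar hP hφ (List.prefix_refl s)⟩, Ttree, ?_⟩
    intro x hx
    obtain ⟨t, ⟨htl, hst⟩, hxt⟩ := aux_mem_Tbar.mp hx (s.length + x.length) (by omega)
    obtain ⟨w, rfl⟩ := hst
    have hc := aux_chain hφ w s
    have hwl : w.length = x.length := by
      have := htl; simp at this; omega
    have hxlen : x.length ≤ (stem (φ (s ++ w))).length := by omega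
    have hstm := aux_stem_isStem (hperf (s ++ w))
    have hcmp : x ∈ restr (φ (s ++ w)) (stem (φ (s ++ w))) := by
      rw [← hstm.2.1]; exact hxt
    have hxσ : x <+: stem (φ (s ++ w)) := by
      rcases hcmp.2 with h' | h'
      · rw [h'.eq_of_length (le_antisymm h'.length_le hxlen)]
      · exact h'
    refine ⟨stem (φ (s ++ w)), aux_stem_mem_Tbar hP hφ (List.prefix_append _ _), hxσ, ?_, ?_⟩
    · exact Ttree _ _ (hφ.2 (s ++ w) false).2
        (aux_stem_mem_Tbar hP hφ ((List.prefix_append s w).trans (List.prefix_append _ _)))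
    · exact Ttree _ _ (hφ.2 (s ++ w) true).2
        (aux_stem_mem_Tbar hP hφ ((List.prefix_append s w).trans (List.prefix_append _ _)))
  · ext x
    simp only [paths, Set.mem_setOf_eq, Set.mem_iInter, Set.mem_iUnion]
    constructor
    · intro hx n hn
      have hfin : {t : List Bool | t.length = n ∧ s <+: t}.Finite :=
        (List.finite_length_eq Bool n).subset (fun t ht => ht.1)
      by_contra hcon
      push_neg at hcon
      set g : List Bool → ℕ := fun t =>
        if h : ∃ m, (List.ofFn fun i : Fin m => x i) ∉ φ t then h.choose else 0 with hg
      set M := hfin.toFinset.sup g with hM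
      obtain ⟨t, ⟨htl, hst⟩, hMt⟩ := aux_mem_Tbar.mp (hx M) n hn
      obtain ⟨m, hm⟩ := hcon t ⟨htl, hst⟩
      have hex : ∃ m, (List.ofFn fun i : Fin m => x i) ∉ φ t := ⟨m, hm⟩
      have hgt : (List.ofFn fun i : Fin (g t) => x i) ∉ φ t := by
        rw [hg]; simp only [dif_pos hex]; exact hex.choose_spec
      have hle : g t ≤ M := Finset.le_sup (by rw [Set.Finite.mem_toFinset]; exact ⟨htl, hst⟩)
      exact hgt (htree t _ _ (aux_ofFn_prefix x hle) hMt)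
    · intro hx m
      rw [aux_mem_Tbar]
      intro n hn
      obtain ⟨t, ht, hxt⟩ := hx n hn
      exact ⟨t, ht, hxt m⟩
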